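/- Let P_L ∈ ℂ^{n1×n1}, P_R ∈ ℂ^{n2×n2}, P_V ∈ ℂ^{s×s} be orthogonal projections (Hermitian and idempotent), and write P_{L⊥} = I − P_L, P_{R⊥} = I − P_R, P_{V⊥} = I − P_V. Then for all tensors Z⋆, Z⁰ ∈ ℂ^{n1×n2×s}: ‖Z⋆ − Z⁰ ×1 P_L ×2 P_R ×3 P_V‖_F ≤ ‖P_{L⊥} M1(Z⋆)‖_F + ‖P_{R⊥} M2(Z⋆)‖_F + ‖P_{V⊥} M3(Z⋆)‖_F + ‖(Z⁰ − Z⋆) ×1 P_L ×2 P_R ×3 P_V‖_F. -/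

import Mathlib

noncomputable section

open scoped BigOperators

namespace MSCS

/-- `wgt n1 n2 a` = number of pairs `(i1,i2) ∈ [n1]×[n2]` with `i1+i2 = a`. -/
def wgt (n1 n2 a : ℕ) : ℕ :=
  ((Finset.univ : Finset (Fin n1 × Fin n2)).filter (fun q => q.1.1 + q.2.1 = a)).card

/-- The finset of pairs on the `a`-th skew diagonal. -/
def skew (n1 n2 a : ℕ) : Finset (Fin n1 × Fin n2) :=
  (Finset.univ : Finset (Fin n1 × Fin n2)).filter (fun q => q.1.1 + q.2.1 = a)

def addIdx {n1 n2 n : ℕ} (hn : n1 + n2 = n + 1) (i1 : Fin n1) (i2 : Fin n2) : Fin n :=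
  ⟨i1.1 + i2.1, by have h1 := i1.2; have h2 := i2.2; omega⟩

def revIdx {m : ℕ} (v : Fin m) : Fin m :=
  ⟨m - 1 - v.1, by have := v.2; omega⟩

def idxLo {a b : ℕ} (c : Fin (b * a)) : Fin a :=
  ⟨c.1 % a, by
    have h : (c : ℕ) < b * a := c.2
    have ha : 0 < a := by
      have hpos : 0 < b * a := lt_of_le_of_lt (Nat.zero_le _) h
      exact Nat.pos_of_ne_zero (fun h0 => by simp [h0] at hpos)
    exact Nat.mod_lt _ ha⟩

def idxHi {a b : ℕ} (c : Fin (b * a)) : Fin b :=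
  ⟨c.1 / a, Nat.div_lt_of_lt_mul (by rw [Nat.mul_comm a b]; exact c.2)⟩

/-- Mode-1 matricization: `[M1 T](i1, i2 + i3·d2) = T i1 i2 i3`. -/
def m1 {d1 d2 d3 : ℕ} (T : Fin d1 → Fin d2 → Fin d3 → ℂ) :
    Matrix (Fin d1) (Fin (d3 * d2)) ℂ :=
  Matrix.of fun i c => T i (idxLo c) (idxHi c)

/-- Mode-2 matricization: `[M2 T](i2, i1 + i3·d1) = T i1 i2 i3`. -/
def m2 {d1 d2 d3 : ℕ} (T : Fin d1 → Fin d2 → Fin d3 → ℂ) :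
    Matrix (Fin d2) (Fin (d3 * d1)) ℂ :=
  Matrix.of fun i c => T (idxLo c) i (idxHi c)

/-- Mode-3 matricization: `[M3 T](i3, i1 + i2·d1) = T i1 i2 i3`. -/
def m3 {d1 d2 d3 : ℕ} (T : Fin d1 → Fin d2 → Fin d3 → ℂ) :
    Matrix (Fin d3) (Fin (d2 * d1)) ℂ :=
  Matrix.of fun i c => T (idxLo c) (idxHi c) i

/-- Kronecker product with flattened indices:
`(A ⊗ B)(iA·u + k, jA·v + l) = A(iA,jA) · B(k,l)`. -/
def kron {p q u v : ℕ} (A : Matrix (Fin p) (Fin q) ℂ) (B : Matrix (Fin u) (Fin v) ℂ) :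
    Matrix (Fin (p * u)) (Fin (q * v)) ℂ :=
  Matrix.of fun i j => A (idxHi i) (idxHi j) * B (idxLo i) (idxLo j)

def mode1 {d1 d2 d3 k : ℕ} (T : Fin d1 → Fin d2 → Fin d3 → ℂ)
    (A : Matrix (Fin k) (Fin d1) ℂ) : Fin k → Fin d2 → Fin d3 → ℂ :=
  fun j i2 i3 => ∑ i1, T i1 i2 i3 * A j i1

def mode2 {d1 d2 d3 k : ℕ} (T : Fin d1 → Fin d2 → Fin d3 → ℂ)
    (A : Matrix (Fin k) (Fin d2) ℂ) : Fin d1 → Fin k → Fin d3 → ℂ :=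
  fun i1 j i3 => ∑ i2, T i1 i2 i3 * A j i2

def mode3 {d1 d2 d3 k : ℕ} (T : Fin d1 → Fin d2 → Fin d3 → ℂ)
    (A : Matrix (Fin k) (Fin d3) ℂ) : Fin d1 → Fin d2 → Fin k → ℂ :=
  fun i1 i2 j => ∑ i3, T i1 i2 i3 * A j i3

/-- Tucker product `(L,R,V)·S`. -/
def tucker {n1 n2 s r1 r2 r3 : ℕ} (L : Matrix (Fin n1) (Fin r1) ℂ)
    (R : Matrix (Fin n2) (Fin r2) ℂ) (V : Matrix (Fin s) (Fin r3) ℂ)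
    (S : Fin r1 → Fin r2 → Fin r3 → ℂ) : Fin n1 → Fin n2 → Fin s → ℂ :=
  fun i1 i2 i3 => ∑ j1, ∑ j2, ∑ j3, S j1 j2 j3 * L i1 j1 * R i2 j2 * V i3 j3

/-- Hankel tensor basis element. -/
def Hbasis {n1 n2 s n : ℕ} (k : Fin n) (j : Fin s) : Fin n1 → Fin n2 → Fin s → ℂ :=
  fun i1 i2 i3 =>
    if i1.1 + i2.1 = k.1 ∧ i3 = j then 1 / (Real.sqrt (wgt n1 n2 k.1) : ℂ) else 0

/-- Reweighted Hankel lifting. -/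
def Ghankel {n1 n2 s n : ℕ} (hn : n1 + n2 = n + 1) (M : Matrix (Fin s) (Fin n) ℂ) :
    Fin n1 → Fin n2 → Fin s → ℂ :=
  fun i1 i2 k => M k (addIdx hn i1 i2) / (Real.sqrt (wgt n1 n2 (i1.1 + i2.1)) : ℂ)

/-- Adjoint Hankel de-lifting. -/
def Gstar {n1 n2 t : ℕ} (n : ℕ) (T : Fin n1 → Fin n2 → Fin t → ℂ) :
    Matrix (Fin t) (Fin n) ℂ :=
  Matrix.of fun k a =>
    (1 / (Real.sqrt (wgt n1 n2 a.1) : ℂ)) * ∑ q ∈ skew n1 n2 a.1, T q.1 q.2 k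

/-- Frobenius inner product of tensors. -/
def tinner {d1 d2 d3 : ℕ} (T1 T2 : Fin d1 → Fin d2 → Fin d3 → ℂ) : ℂ :=
  ∑ i1, ∑ i2, ∑ i3, (starRingEnd ℂ) (T1 i1 i2 i3) * T2 i1 i2 i3

/-- Frobenius inner product of matrices. -/
def minner {m n : ℕ} (X Y : Matrix (Fin m) (Fin n) ℂ) : ℂ :=
  ∑ i, ∑ j, (starRingEnd ℂ) (X i j) * Y i j

/-- Frobenius norm of a tensor. -/
def frobT {d1 d2 d3 : ℕ} (T : Fin d1 → Fin d2 → Fin d3 → ℂ) : ℝ :=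
  Real.sqrt (∑ i1, ∑ i2, ∑ i3, ‖T i1 i2 i3‖ ^ 2)

/-- Frobenius norm of a matrix. -/
def frobM {m n : ℕ} (A : Matrix (Fin m) (Fin n) ℂ) : ℝ :=
  Real.sqrt (∑ i, ∑ j, ‖A i j‖ ^ 2)

/-- Spectral (ℓ2 operator) norm of a matrix. -/
def specNorm {m n : ℕ} (A : Matrix (Fin m) (Fin n) ℂ) : ℝ :=
  ‖(Matrix.toEuclideanLin A).toContinuousLinearMap‖

/-- `‖·‖_{2,∞}`: maximum ℓ2 norm of a row. -/
def twoInf {m n : ℕ} (A : Matrix (Fin m) (Fin n) ℂ) : ℝ :=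
  ⨆ i, Real.sqrt (∑ j, ‖A i j‖ ^ 2)

/-- `σmax(T) = max of spectral norms of the three matricizations`. -/
def sigmaMax {d1 d2 d3 : ℕ} (T : Fin d1 → Fin d2 → Fin d3 → ℂ) : ℝ :=
  max (specNorm (m1 T)) (max (specNorm (m2 T)) (specNorm (m3 T)))

/-- Entrywise complex conjugate of a matrix. -/
def conjM {m n : ℕ} (A : Matrix (Fin m) (Fin n) ℂ) : Matrix (Fin m) (Fin n) ℂ :=
  Matrix.of fun i j => (starRingEnd ℂ) (A i j)


section Aux17

lemma conj_mul_self (z : ℂ) : (starRingEnd ℂ) z * z = ((‖z‖^2 : ℝ) : ℂ) := by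
  rw [Complex.conj_mul']; norm_cast

lemma sum_rot {α β γ M : Type*} [Fintype α] [Fintype β] [Fintype γ] [AddCommMonoid M]
    (f : α → β → γ → M) :
    ∑ i, ∑ j, ∑ k, f i j k = ∑ k, ∑ j, ∑ i, f i j k := by
  rw [Finset.sum_comm]
  conv_rhs => rw [Finset.sum_comm]
  exact Finset.sum_congr rfl fun j _ => Finset.sum_comm

lemma sum_idx {a b : ℕ} (f : Fin a → Fin b → ℝ) :
    ∑ c : Fin (b * a), f (idxLo c) (idxHi c) = ∑ i3 : Fin b, ∑ i2 : Fin a, f i2 i3 := by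
  rw [← Equiv.sum_comp (finProdFinEquiv : Fin b × Fin a ≃ Fin (b*a))
      (fun c => f (idxLo c) (idxHi c))]
  have key : ∀ p : Fin b × Fin a,
      f (idxLo (finProdFinEquiv p)) (idxHi (finProdFinEquiv p)) = f p.2 p.1 := by
    intro p
    have ha : 0 < a := lt_of_le_of_lt (Nat.zero_le _) p.2.2
    have hv : ((finProdFinEquiv p : Fin (b*a)) : ℕ) = p.2.1 + a * p.1.1 :=
      finProdFinEquiv_apply_val p
    have hlo : idxLo (finProdFinEquiv p) = p.2 := by
      apply Fin.ext
      show ((finProdFinEquiv p : Fin (b*a)) : ℕ) % a = p.2.1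
      rw [hv, Nat.add_mul_mod_self_left, Nat.mod_eq_of_lt p.2.2]
    have hhi : idxHi (finProdFinEquiv p) = p.1 := by
      apply Fin.ext
      show ((finProdFinEquiv p : Fin (b*a)) : ℕ) / a = p.1.1
      rw [hv, Nat.add_mul_div_left _ _ ha, Nat.div_eq_of_lt p.2.2, Nat.zero_add]
    rw [hlo, hhi]
  calc ∑ p : Fin b × Fin a, f (idxLo (finProdFinEquiv p)) (idxHi (finProdFinEquiv p))
      = ∑ p : Fin b × Fin a, f p.2 p.1 := Finset.sum_congr rfl fun p _ => key p
    _ = ∑ i3 : Fin b, ∑ i2 : Fin a, f i2 i3 := Fintype.sum_prod_type _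

variable {d1 d2 d3 k m n : ℕ}

lemma frobT_eq_m1 (T : Fin d1 → Fin d2 → Fin d3 → ℂ) : frobT T = frobM (m1 T) := by
  unfold frobT frobM m1
  congr 1
  refine Finset.sum_congr rfl fun i1 _ => ?_
  rw [show (∑ c : Fin (d3 * d2), ‖(Matrix.of fun i c => T i (idxLo c) (idxHi c)) i1 c‖^2)
      = ∑ i3, ∑ i2, ‖T i1 i2 i3‖^2 from sum_idx (fun i2 i3 => ‖T i1 i2 i3‖^2)]
  exact Finset.sum_comm

lemma frobT_eq_m2 (T : Fin d1 → Fin d2 → Fin d3 → ℂ) : frobT T = frobM (m2 T) := by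
  unfold frobT frobM m2
  congr 1
  have h : ∀ i2 : Fin d2,
      (∑ c : Fin (d3 * d1), ‖(Matrix.of fun i c => T (idxLo c) i (idxHi c)) i2 c‖^2)
      = ∑ i3, ∑ i1, ‖T i1 i2 i3‖^2 := fun i2 => sum_idx (fun i1 i3 => ‖T i1 i2 i3‖^2)
  simp_rw [h]
  rw [Finset.sum_comm]
  exact Finset.sum_congr rfl fun i2 _ => Finset.sum_comm

lemma frobT_eq_m3 (T : Fin d1 → Fin d2 → Fin d3 → ℂ) : frobT T = frobM (m3 T) := by
  unfold frobT frobM m3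
  congr 1
  have h : ∀ i3 : Fin d3,
      (∑ c : Fin (d2 * d1), ‖(Matrix.of fun i c => T (idxLo c) (idxHi c) i) i3 c‖^2)
      = ∑ i2, ∑ i1, ‖T i1 i2 i3‖^2 := fun i3 => sum_idx (fun i1 i2 => ‖T i1 i2 i3‖^2)
  simp_rw [h]
  exact sum_rot _

lemma m1_mode1 (T : Fin d1 → Fin d2 → Fin d3 → ℂ) (A : Matrix (Fin k) (Fin d1) ℂ) :
    m1 (mode1 T A) = A * m1 T := by
  ext j c
  simp only [m1, mode1, Matrix.of_apply, Matrix.mul_apply]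
  exact Finset.sum_congr rfl fun i1 _ => mul_comm _ _

lemma m2_mode2 (T : Fin d1 → Fin d2 → Fin d3 → ℂ) (A : Matrix (Fin k) (Fin d2) ℂ) :
    m2 (mode2 T A) = A * m2 T := by
  ext j c
  simp only [m2, mode2, Matrix.of_apply, Matrix.mul_apply]
  exact Finset.sum_congr rfl fun i2 _ => mul_comm _ _

lemma m3_mode3 (T : Fin d1 → Fin d2 → Fin d3 → ℂ) (A : Matrix (Fin k) (Fin d3) ℂ) :
    m3 (mode3 T A) = A * m3 T := by
  ext j c
  simp only [m3, mode3, Matrix.of_apply, Matrix.mul_apply]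
  exact Finset.sum_congr rfl fun i3 _ => mul_comm _ _

lemma minner_self (A : Matrix (Fin m) (Fin n) ℂ) :
    minner A A = ((∑ i, ∑ j, ‖A i j‖^2 : ℝ) : ℂ) := by
  unfold minner
  simp_rw [conj_mul_self]
  push_cast
  rfl

lemma minner_mul_left (M : Matrix (Fin m) (Fin m) ℂ) (A B : Matrix (Fin m) (Fin n) ℂ) :
    minner (M * A) B = minner A (M.conjTranspose * B) := by
  unfold minner
  simp only [Matrix.mul_apply, Matrix.conjTranspose_apply, map_sum, map_mul,
    Finset.sum_mul, Finset.mul_sum, starRingEnd_apply]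
  rw [sum_rot (fun i j k => star (M i k) * star (A k j) * B i j)]
  exact Finset.sum_congr rfl fun k _ => Finset.sum_congr rfl fun j _ =>
    Finset.sum_congr rfl fun i _ => by ring

lemma minner_add_right (A X Y : Matrix (Fin m) (Fin n) ℂ) :
    minner A (X + Y) = minner A X + minner A Y := by
  unfold minner
  simp [Matrix.add_apply, mul_add, Finset.sum_add_distrib]

lemma frobM_proj_le (P : Matrix (Fin m) (Fin m) ℂ) (h1 : P.conjTranspose = P)
    (h2 : P * P = P) (A : Matrix (Fin m) (Fin n) ℂ) :
    frobM (P * A) ≤ frobM A := by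
  set Q : Matrix (Fin m) (Fin m) ℂ := 1 - P with hQ
  have hQ1 : Q.conjTranspose = Q := by
    rw [hQ, Matrix.conjTranspose_sub, Matrix.conjTranspose_one, h1]
  have hQ2 : Q * Q = Q := by
    simp only [hQ, Matrix.sub_mul, Matrix.mul_sub, Matrix.one_mul, Matrix.mul_one, h2]
    abel
  have key : minner (P*A) (P*A) + minner (Q*A) (Q*A) = minner A A := by
    rw [minner_mul_left, minner_mul_left, h1, hQ1,
      ← Matrix.mul_assoc, ← Matrix.mul_assoc, h2, hQ2,
      ← minner_add_right, ← Matrix.add_mul]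
    rw [hQ]
    simp
  rw [minner_self, minner_self, minner_self] at key
  have key2 : (∑ i, ∑ j, ‖(P*A) i j‖^2) + (∑ i, ∑ j, ‖(Q*A) i j‖^2)
      = ∑ i, ∑ j, ‖A i j‖^2 := by
    have := key
    rw [← Complex.ofReal_add] at this
    exact_mod_cast this
  have hq : (0:ℝ) ≤ ∑ i, ∑ j, ‖(Q*A) i j‖^2 := by positivity
  unfold frobM
  apply Real.sqrt_le_sqrt
  linarith

lemma mode1_one (T : Fin d1 → Fin d2 → Fin d3 → ℂ) :
    mode1 T (1 : Matrix (Fin d1) (Fin d1) ℂ) = T := by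
  funext j i2 i3
  simp [mode1, Matrix.one_apply]

lemma mode2_one (T : Fin d1 → Fin d2 → Fin d3 → ℂ) :
    mode2 T (1 : Matrix (Fin d2) (Fin d2) ℂ) = T := by
  funext i1 j i3
  simp [mode2, Matrix.one_apply]

lemma mode3_one (T : Fin d1 → Fin d2 → Fin d3 → ℂ) :
    mode3 T (1 : Matrix (Fin d3) (Fin d3) ℂ) = T := by
  funext i1 i2 j
  simp [mode3, Matrix.one_apply]

lemma mode1_matSub (T : Fin d1 → Fin d2 → Fin d3 → ℂ) (A B : Matrix (Fin k) (Fin d1) ℂ) :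
    mode1 T (A - B) = mode1 T A - mode1 T B := by
  funext j i2 i3
  simp [mode1, Matrix.sub_apply, mul_sub, Finset.sum_sub_distrib]

lemma mode2_matSub (T : Fin d1 → Fin d2 → Fin d3 → ℂ) (A B : Matrix (Fin k) (Fin d2) ℂ) :
    mode2 T (A - B) = mode2 T A - mode2 T B := by
  funext i1 j i3
  simp [mode2, Matrix.sub_apply, mul_sub, Finset.sum_sub_distrib]

lemma mode3_matSub (T : Fin d1 → Fin d2 → Fin d3 → ℂ) (A B : Matrix (Fin k) (Fin d3) ℂ) :
    mode3 T (A - B) = mode3 T A - mode3 T B := by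
  funext i1 i2 j
  simp [mode3, Matrix.sub_apply, mul_sub, Finset.sum_sub_distrib]

lemma mode1_tensSub (X Y : Fin d1 → Fin d2 → Fin d3 → ℂ) (A : Matrix (Fin k) (Fin d1) ℂ) :
    mode1 (X - Y) A = mode1 X A - mode1 Y A := by
  funext j i2 i3
  simp [mode1, sub_mul, Finset.sum_sub_distrib]

lemma mode2_tensSub (X Y : Fin d1 → Fin d2 → Fin d3 → ℂ) (A : Matrix (Fin k) (Fin d2) ℂ) :
    mode2 (X - Y) A = mode2 X A - mode2 Y A := by
  funext i1 j i3
  simp [mode2, sub_mul, Finset.sum_sub_distrib]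

lemma mode3_tensSub (X Y : Fin d1 → Fin d2 → Fin d3 → ℂ) (A : Matrix (Fin k) (Fin d3) ℂ) :
    mode3 (X - Y) A = mode3 X A - mode3 Y A := by
  funext i1 i2 j
  simp [mode3, sub_mul, Finset.sum_sub_distrib]

lemma mode2_mode1 {k1 k2 : ℕ} (T : Fin d1 → Fin d2 → Fin d3 → ℂ)
    (A : Matrix (Fin k1) (Fin d1) ℂ) (B : Matrix (Fin k2) (Fin d2) ℂ) :
    mode2 (mode1 T A) B = mode1 (mode2 T B) A := by
  funext j1 j2 i3
  simp only [mode1, mode2, Finset.sum_mul]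
  rw [Finset.sum_comm]
  exact Finset.sum_congr rfl fun i1 _ => Finset.sum_congr rfl fun i2 _ => by ring

lemma mode3_mode1 {k1 k3 : ℕ} (T : Fin d1 → Fin d2 → Fin d3 → ℂ)
    (A : Matrix (Fin k1) (Fin d1) ℂ) (C : Matrix (Fin k3) (Fin d3) ℂ) :
    mode3 (mode1 T A) C = mode1 (mode3 T C) A := by
  funext j1 i2 j3
  simp only [mode1, mode3, Finset.sum_mul]
  rw [Finset.sum_comm]
  exact Finset.sum_congr rfl fun i1 _ => Finset.sum_congr rfl fun i3 _ => by ring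

lemma mode3_mode2 {k2 k3 : ℕ} (T : Fin d1 → Fin d2 → Fin d3 → ℂ)
    (B : Matrix (Fin k2) (Fin d2) ℂ) (C : Matrix (Fin k3) (Fin d3) ℂ) :
    mode3 (mode2 T B) C = mode2 (mode3 T C) B := by
  funext i1 j2 j3
  simp only [mode2, mode3, Finset.sum_mul]
  rw [Finset.sum_comm]
  exact Finset.sum_congr rfl fun i2 _ => Finset.sum_congr rfl fun i3 _ => by ring

lemma frobT_eq_norm (T : Fin d1 → Fin d2 → Fin d3 → ℂ) :
    frobT T = ‖(show EuclideanSpace ℂ (Fin d1 × Fin d2 × Fin d3) from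
      WithLp.toLp 2 (fun p : Fin d1 × Fin d2 × Fin d3 => T p.1 p.2.1 p.2.2))‖ := by
  rw [EuclideanSpace.norm_eq]
  unfold frobT
  congr 1
  rw [Fintype.sum_prod_type]
  exact Finset.sum_congr rfl fun i1 _ =>
    (Fintype.sum_prod_type (fun y : Fin d2 × Fin d3 => ‖T i1 y.1 y.2‖^2)).symm

lemma frobT_add_le (X Y : Fin d1 → Fin d2 → Fin d3 → ℂ) :
    frobT (X + Y) ≤ frobT X + frobT Y := by
  rw [frobT_eq_norm X, frobT_eq_norm Y, frobT_eq_norm (X + Y)]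
  exact norm_add_le
    (show EuclideanSpace ℂ (Fin d1 × Fin d2 × Fin d3) from WithLp.toLp 2 (fun p : Fin d1 × Fin d2 × Fin d3 => X p.1 p.2.1 p.2.2))
    (show EuclideanSpace ℂ (Fin d1 × Fin d2 × Fin d3) from WithLp.toLp 2 (fun p : Fin d1 × Fin d2 × Fin d3 => Y p.1 p.2.1 p.2.2))

lemma frobT_neg (X : Fin d1 → Fin d2 → Fin d3 → ℂ) : frobT (-X) = frobT X := by
  unfold frobT
  congr 1
  simp [Pi.neg_apply]

lemma frobT_mode1_le (P : Matrix (Fin d1) (Fin d1) ℂ) (h1 : P.conjTranspose = P)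
    (h2 : P * P = P) (T : Fin d1 → Fin d2 → Fin d3 → ℂ) :
    frobT (mode1 T P) ≤ frobT T := by
  calc frobT (mode1 T P) = frobM (P * m1 T) := by rw [frobT_eq_m1, m1_mode1]
    _ ≤ frobM (m1 T) := frobM_proj_le P h1 h2 _
    _ = frobT T := (frobT_eq_m1 T).symm

lemma frobT_mode2_le (P : Matrix (Fin d2) (Fin d2) ℂ) (h1 : P.conjTranspose = P)
    (h2 : P * P = P) (T : Fin d1 → Fin d2 → Fin d3 → ℂ) :
    frobT (mode2 T P) ≤ frobT T := by
  calc frobT (mode2 T P) = frobM (P * m2 T) := by rw [frobT_eq_m2, m2_mode2]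
    _ ≤ frobM (m2 T) := frobM_proj_le P h1 h2 _
    _ = frobT T := (frobT_eq_m2 T).symm

end Aux17

/-- error decomposition for the projected estimate. -/
theorem statement17 (n1 n2 s : ℕ)
    (PL : Matrix (Fin n1) (Fin n1) ℂ) (hPL1 : PL.conjTranspose = PL) (hPL2 : PL * PL = PL)
    (PR : Matrix (Fin n2) (Fin n2) ℂ) (hPR1 : PR.conjTranspose = PR) (hPR2 : PR * PR = PR)
    (PV : Matrix (Fin s) (Fin s) ℂ) (hPV1 : PV.conjTranspose = PV) (hPV2 : PV * PV = PV) :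
    ∀ (Zs Z0 : Fin n1 → Fin n2 → Fin s → ℂ),
      frobT (fun i1 i2 i3 =>
          Zs i1 i2 i3 - mode3 (mode2 (mode1 Z0 PL) PR) PV i1 i2 i3)
        ≤ frobM ((1 - PL) * m1 Zs) + frobM ((1 - PR) * m2 Zs) + frobM ((1 - PV) * m3 Zs)
            + frobT (mode3 (mode2 (mode1
                (fun i1 i2 i3 => Z0 i1 i2 i3 - Zs i1 i2 i3) PL) PR) PV) := by
  intro Zs Z0
  set Q := fun (T : Fin n1 → Fin n2 → Fin s → ℂ) => mode3 (mode2 (mode1 T PL) PR) PV with hQdef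
  set E1 : Fin n1 → Fin n2 → Fin s → ℂ := mode1 Zs (1 - PL) with hE1
  set E2 : Fin n1 → Fin n2 → Fin s → ℂ := mode1 (mode2 Zs (1 - PR)) PL with hE2
  set E3 : Fin n1 → Fin n2 → Fin s → ℂ := mode2 (mode1 (mode3 Zs (1 - PV)) PL) PR with hE3
  set E4 : Fin n1 → Fin n2 → Fin s → ℂ :=
    mode3 (mode2 (mode1 (fun i1 i2 i3 => Z0 i1 i2 i3 - Zs i1 i2 i3) PL) PR) PV with hE4
  have e1 : E1 = Zs - mode1 Zs PL := by
    rw [hE1, mode1_matSub, mode1_one]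
  have e2 : E2 = mode1 Zs PL - mode2 (mode1 Zs PL) PR := by
    rw [hE2, mode2_matSub, mode2_one, mode1_tensSub, mode2_mode1]
  have e3 : E3 = mode2 (mode1 Zs PL) PR - mode3 (mode2 (mode1 Zs PL) PR) PV := by
    rw [hE3, mode3_matSub, mode3_one, mode1_tensSub, mode2_tensSub,
      mode3_mode2, mode3_mode1]
  have hsub : (fun i1 i2 i3 => Z0 i1 i2 i3 - Zs i1 i2 i3) = Z0 - Zs := rfl
  have e4 : E4 = Q Z0 - Q Zs := by
    rw [hE4, hsub, mode1_tensSub, mode2_tensSub, mode3_tensSub, hQdef]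
  have hdecomp : (fun i1 i2 i3 =>
      Zs i1 i2 i3 - mode3 (mode2 (mode1 Z0 PL) PR) PV i1 i2 i3)
      = E1 + (E2 + (E3 + (-E4))) := by
    rw [e1, e2, e3, e4]
    funext i1 i2 i3
    simp only [Pi.add_apply, Pi.sub_apply, Pi.neg_apply, hQdef]
    ring
  rw [hdecomp]
  have b1 : frobT E1 = frobM ((1 - PL) * m1 Zs) := by
    rw [hE1, frobT_eq_m1, m1_mode1]
  have b2 : frobT E2 ≤ frobM ((1 - PR) * m2 Zs) := by
    calc frobT E2 ≤ frobT (mode2 Zs (1 - PR)) := by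
          rw [hE2]; exact frobT_mode1_le PL hPL1 hPL2 _
      _ = frobM ((1 - PR) * m2 Zs) := by rw [frobT_eq_m2, m2_mode2]
  have b3 : frobT E3 ≤ frobM ((1 - PV) * m3 Zs) := by
    calc frobT E3 ≤ frobT (mode1 (mode3 Zs (1 - PV)) PL) := by
          rw [hE3]; exact frobT_mode2_le PR hPR1 hPR2 _
      _ ≤ frobT (mode3 Zs (1 - PV)) := frobT_mode1_le PL hPL1 hPL2 _
      _ = frobM ((1 - PV) * m3 Zs) := by rw [frobT_eq_m3, m3_mode3]
  have b4 : frobT (-E4) = frobT E4 := frobT_neg E4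
  have t1 := frobT_add_le E1 (E2 + (E3 + (-E4)))
  have t2 := frobT_add_le E2 (E3 + (-E4))
  have t3 := frobT_add_le E3 (-E4)
  rw [b4] at t3
  linarith


end MSCS
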